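/- For every formal context K = (G,M,I) one can construct a complete many-valued context K_W (with the same attribute set M) such that for all X, Y ⊆ M the implication X → Y holds in K if and only if Y is functionally dependent on X in K_W. -/

import Mathlib

universe u v

def extentOf {G M : Type*} (I : G → M → Prop) (B : Set M) : Set G :=
  {g | ∀ m ∈ B, I g m}

/-- The implication `A → B` holds in the context `(G,M,I)` if `A′ ⊆ B′`. -/
def ImpHolds {G M : Type*} (I : G → M → Prop) (A B : Set M) : Prop :=
  extentOf I A ⊆ extentOf I B

/-- `Y` is functionally dependent on `X` in the complete many-valued context `(H,M,W,f)`. -/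
def FunDep {H M W : Type*} (f : H → M → W) (X Y : Set M) : Prop :=
  ∀ g h : H, (∀ m ∈ X, f g m = f h m) → ∀ n ∈ Y, f g n = f h n

/-- For every formal context `(G,M,I)` one can construct a complete many-valued context
(with the same attribute set `M`) such that an implication `X → Y` holds in `(G,M,I)` iff
`Y` is functionally dependent on `X` in the many-valued context. -/
theorem implication_iff_funDep_of_constructed_context {G : Type u} {M : Type v}
    (I : G → M → Prop) :
    ∃ (H : Type u) (W : Type u) (f : H → M → W),
      ∀ X Y : Set M, ImpHolds I X Y ↔ FunDep f X Y := by
  classical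
  refine ⟨Option G, Option G,
    fun h m => match h with
      | none => none
      | some g => if I g m then none else some g, fun X Y => ?_⟩
  constructor
  · intro himp g h hagree n hn
    match g, h with
    | none, none => rfl
    | some g, none =>
      have hgX : g ∈ extentOf I X := by
        intro m hm
        have := hagree m hm
        simp only at this
        by_contra hI
        rw [if_neg hI] at this
        exact nomatch this
      have := himp hgX n hn
      simp [this]
    | none, some g =>
      have hgX : g ∈ extentOf I X := by
        intro m hm
        have := (hagree m hm).symm
        simp only at this
        by_contra hI
        rw [if_neg hI] at this
        exact nomatch this
      have := himp hgX n hn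
      simp [this]
    | some g, some h =>
      by_cases hgh : g = h
      · subst hgh; rfl
      · have hgX : g ∈ extentOf I X ∧ h ∈ extentOf I X := by
          constructor
          · intro m hm
            by_contra hI
            have := hagree m hm
            simp only at this
            rcases Decidable.em (I h m) with h2 | h2
            · rw [if_neg hI, if_pos h2] at this; exact nomatch this
            · rw [if_neg hI, if_neg h2] at this; exact hgh (Option.some.inj this)
          · intro m hm
            by_contra hI
            have := hagree m hm
            simp only at this
            rcases Decidable.em (I g m) with h2 | h2
            · rw [if_neg hI, if_pos h2] at this; exact nomatch this
            · rw [if_neg hI, if_neg h2] at this; exact hgh (Option.some.inj this)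
        have h1 := himp hgX.1 n hn
        have h2 := himp hgX.2 n hn
        simp [h1, h2]
  · intro hfd g hgX n hn
    have hagree : ∀ m ∈ X, (fun h m => match h with
      | none => none
      | some g => if I g m then none else some g : Option G → M → Option G) (some g) m
        = (fun h m => match h with
      | none => none
      | some g => if I g m then none else some g : Option G → M → Option G) none m := by
      intro m hm
      simp [hgX m hm]
    have := hfd (some g) none hagree n hn
    simp only at this
    by_contra hI
    rw [if_neg hI] at this
    exact nomatch this
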